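/- Fix S > 0, K ≥ 2, reals L_1,...,L_K, λ < min_i L_i with x_i = S/(L_i - λ) summing to 1. Perturb coordinate j by 0 < δ ≤ S/(4 x_j (1 - x_j)) and let z_i = S/(L'_i - λ') be the updated probability vector. Then z_i ≥ x_i / 2 for all i ∈ {1,...,K}. -/
import Mathlib


theorem stmt_16 (S : ℝ) (hS : 0 < S) (K : ℕ) (hK : 2 ≤ K)
    (L : Fin K → ℝ) (lam lam' δ : ℝ) (j : Fin K)
    (x z : Fin K → ℝ)
    (hxdef : ∀ i, x i = S / (L i - lam))
    (hlam : ∀ i, lam < L i)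
    (hxsum : ∑ i, x i = 1)
    (hδpos : 0 < δ)
    (hxj : x j < 1)
    (hδle : δ ≤ S / (4 * x j * (1 - x j)))
    (hzdef : ∀ i, z i = S / ((L i + (if i = j then δ else 0)) - lam'))
    (hlam' : ∀ i, lam' < L i + (if i = j then δ else 0))
    (hzsum : ∑ i, z i = 1) :
    ∀ i, x i / 2 ≤ z i := by
  have ha : ∀ i, 0 < L i - lam := fun i => sub_pos.2 (hlam i)
  have hb : ∀ i, 0 < (L i + (if i = j then δ else 0)) - lam' := fun i => sub_pos.2 (hlam' i)
  have hxpos : ∀ i, 0 < x i := fun i => (hxdef i) ▸ div_pos hS (ha i)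
  have hzpos : ∀ i, 0 < z i := fun i => (hzdef i) ▸ div_pos hS (hb i)
  have hne : (Finset.univ : Finset (Fin K)).Nonempty := ⟨j, Finset.mem_univ j⟩
  have ht : lam ≤ lam' := by
    by_contra h
    push_neg at h
    have hlt : ∀ i ∈ Finset.univ, z i < x i := by
      intro i _
      rw [hxdef, hzdef]
      apply div_lt_div_of_pos_left hS (ha i)
      have h0 : (0:ℝ) ≤ (if i = j then δ else 0) := by positivity
      linarith
    have hlt2 := Finset.sum_lt_sum_of_nonempty hne hlt
    rw [hzsum, hxsum] at hlt2
    exact lt_irrefl 1 hlt2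
  have key : ∀ i, (z i - x i) * S = ((lam' - lam) - (if i = j then δ else 0)) * (x i * z i) := by
    intro i
    have h1 := (ha i).ne'
    have h2 := (hb i).ne'
    rw [hxdef, hzdef]
    field_simp
    ring
  obtain ⟨B, hB⟩ : ∃ B, B = ∑ i, x i * z i := ⟨_, rfl⟩
  have hBpos : 0 < B := hB ▸ Finset.sum_pos (fun i _ => mul_pos (hxpos i) (hzpos i)) hne
  have hsum0 : (lam' - lam) * B = δ * (x j * z j) := by
    have h0 : ∑ i, (z i - x i) * S = 0 := by
      rw [← Finset.sum_mul, Finset.sum_sub_distrib, hzsum, hxsum]; ring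
    have h1 : ∑ i, (((lam' - lam) - (if i = j then δ else 0)) * (x i * z i)) = 0 := by
      have hc : ∑ i, (((lam' - lam) - (if i = j then δ else 0)) * (x i * z i))
          = ∑ i, (z i - x i) * S := Finset.sum_congr rfl (fun i _ => (key i).symm)
      rw [hc, h0]
    have h3 : ∑ i, (if i = j then δ else 0) * (x i * z i) = δ * (x j * z j) := by
      rw [Finset.sum_eq_single j]
      · simp
      · intro i _ hij; simp [hij]
      · simp
    have h4 : ∑ i, (((lam' - lam) - (if i = j then δ else 0)) * (x i * z i))
        = (lam' - lam) * B - δ * (x j * z j) := by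
      rw [hB, Finset.mul_sum, ← h3, ← Finset.sum_sub_distrib]
      exact Finset.sum_congr rfl (fun i _ => by ring)
    rw [h4] at h1
    linarith
  have hz1 : ∀ i, z i ≤ 1 := by
    intro i
    have h := Finset.single_le_sum (f := z) (fun k _ => (hzpos k).le) (Finset.mem_univ i)
    rw [hzsum] at h; exact h
  have hxj0 : 0 < x j := hxpos j
  have h1xj : 0 < 1 - x j := by linarith
  have hδle' : δ * (4 * x j * (1 - x j)) ≤ S := by
    rw [← le_div_iff₀ (by positivity)]
    exact hδle
  intro i
  by_cases hij : i = j
  · subst hij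
    have hkeyj : (z i - x i) * S = ((lam' - lam) - δ) * (x i * z i) := by
      have := key i; simpa using this
    have hP : 0 < x i * z i := mul_pos (hxpos i) (hzpos i)
    by_cases hcase : x i ≤ 3/4
    · -- δ ≤ S / x i, use t ≥ 0
      have hδx : δ * x i ≤ S := by nlinarith
      nlinarith [hzpos i, hxpos i, mul_nonneg (sub_nonneg.2 ht) hP.le]
    · push_neg at hcase
      -- A := B - x i * z i ≤ 1 - x i
      have hPB : x i * z i ≤ B := by
        rw [hB, ← Finset.sum_erase_add Finset.univ _ (Finset.mem_univ i)]
        have : 0 ≤ ∑ k ∈ Finset.univ.erase i, x k * z k :=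
          Finset.sum_nonneg (fun k _ => (mul_pos (hxpos k) (hzpos k)).le)
        linarith
      have hAle : B - x i * z i ≤ 1 - x i := by
        have e1 : B - x i * z i = ∑ k ∈ Finset.univ.erase i, x k * z k := by
          rw [hB, ← Finset.sum_erase_add Finset.univ _ (Finset.mem_univ i)]; ring
        have e2 : ∑ k ∈ Finset.univ.erase i, x k * z k ≤ ∑ k ∈ Finset.univ.erase i, x k := by
          apply Finset.sum_le_sum
          intro k _
          nlinarith [hxpos k, hz1 k, hzpos k]
        have e3 : ∑ k ∈ Finset.univ.erase i, x k = 1 - x i := by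
          have := Finset.sum_erase_add Finset.univ x (Finset.mem_univ i)
          rw [hxsum] at this
          linarith
        rw [e1]; rw [e3] at e2; exact e2
      -- identity: (x i - z i) * S * B = δ * (B - x i z i) * (x i z i)
      have hId : (x i - z i) * S * B = δ * (B - x i * z i) * (x i * z i) := by
        nlinarith [hkeyj, hsum0]
      have hstep : δ * (B - x i * z i) * (x i * z i) ≤ δ * (1 - x i) * B := by
        have t1 : δ * (B - x i * z i) * (x i * z i) ≤ δ * (1 - x i) * (x i * z i) :=
          mul_le_mul_of_nonneg_right (mul_le_mul_of_nonneg_left hAle hδpos.le) hP.le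
        have t2 : δ * (1 - x i) * (x i * z i) ≤ δ * (1 - x i) * B :=
          mul_le_mul_of_nonneg_left hPB (by positivity)
        linarith
      have hδ1x : δ * (1 - x i) * (4 * x i) ≤ S := by nlinarith
      have d1 : (x i - z i) * S * B ≤ δ * (1 - x i) * B := by linarith
      have d2 : (x i - z i) * S ≤ δ * (1 - x i) :=
        le_of_mul_le_mul_right d1 hBpos
      have d3 : (x i - z i) * S * (4 * x i) ≤ S := by
        nlinarith [mul_nonneg (sub_nonneg.2 d2) (by positivity : (0:ℝ) ≤ 4 * x i)]
      have d4 : (x i - z i) * (4 * x i) * S ≤ 1 * S := by linear_combination d3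
      have d5 : (x i - z i) * (4 * x i) ≤ 1 := le_of_mul_le_mul_right d4 hS
      by_contra hcon
      push_neg at hcon
      have e1 : 0 < x i * (x i - 2 * z i) := mul_pos hxj0 (by linarith)
      have e1' : 0 < x i * x i - 2 * (x i * z i) := by linear_combination e1
      have d5' : 4 * (x i * x i) - 4 * (x i * z i) ≤ 1 := by linear_combination d5
      have e2 : (3/4 : ℝ) * (3/4) < x i * x i :=
        mul_lt_mul'' hcase hcase (by norm_num) (by norm_num)
      linarith
  · have hxz : x i ≤ z i := by
      have hb' : 0 < L i + 0 - lam' := by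
        have h := hb i; rw [if_neg hij] at h; linarith
      rw [hxdef, hzdef, if_neg hij]
      gcongr
      all_goals linarith
    linarith [hxpos i]
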